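/- If T is an n-quasi strict m-isometry, then the operators β_{k,n}(T) for k = 0, 1, ..., m-1 are linearly independent in L(H), where β_{k,n}(T) = T^{*n}(sum_{j=0}^k (-1)^{k-j} binom(k,j) T^{*j}T^j)T^n. -/

import Mathlib

variable {H : Type*} [NormedAddCommGroup H] [InnerProductSpace ℂ H] [CompleteSpace H]

/-- `β_m(T) = ∑_{k=0}^m (-1)^{m-k} C(m,k) T^{*k} T^k`. -/
noncomputable def betaOp (T : H →L[ℂ] H) (m : ℕ) : H →L[ℂ] H :=
  ∑ k ∈ Finset.range (m + 1),
    ((-1 : ℂ) ^ (m - k) * (m.choose k : ℂ)) • ((ContinuousLinearMap.adjoint T) ^ k * T ^ k)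

/-- `T` is an `n`-quasi-`m`-isometry if `T^{*n} β_m(T) T^n = 0`. -/
def IsNQuasiMIsometry (T : H →L[ℂ] H) (n m : ℕ) : Prop :=
  (ContinuousLinearMap.adjoint T) ^ n * betaOp T m * T ^ n = 0

/-- The conjugation map `A ↦ T* A T` as a linear endomorphism. -/
noncomputable def phiOp (T : H →L[ℂ] H) : Module.End ℂ (H →L[ℂ] H) :=
  LinearMap.mulLeft ℂ (ContinuousLinearMap.adjoint T) * LinearMap.mulRight ℂ T

lemma phiOp_apply (T A : H →L[ℂ] H) : phiOp T A = ContinuousLinearMap.adjoint T * A * T := by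
  simp [phiOp, Module.End.mul_apply, LinearMap.mulLeft_apply, LinearMap.mulRight_apply, mul_assoc]

lemma phiOp_pow_one (T : H →L[ℂ] H) (j : ℕ) :
    (phiOp T ^ j) 1 = (ContinuousLinearMap.adjoint T) ^ j * T ^ j := by
  induction j with
  | zero => simp
  | succ j ih =>
      rw [pow_succ', Module.End.mul_apply, ih, phiOp_apply, pow_succ', pow_succ]
      noncomm_ring

lemma betaOp_eq (T : H →L[ℂ] H) (m : ℕ) : betaOp T m = ((phiOp T - 1) ^ m) 1 := by
  have hc : Commute (phiOp T) (-1 : Module.End ℂ (H →L[ℂ] H)) := Commute.neg_one_right (R := Module.End ℂ (H →L[ℂ] H)) _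
  rw [sub_eq_add_neg, hc.add_pow]
  rw [betaOp]
  simp only [LinearMap.sum_apply]
  refine Finset.sum_congr rfl fun j hj => ?_
  have : ((-1 : Module.End ℂ (H →L[ℂ] H)) ^ (m - j) * (m.choose j : Module.End ℂ (H →L[ℂ] H)))
      = algebraMap ℂ _ ((-1 : ℂ) ^ (m - j) * (m.choose j : ℂ)) := by
    rw [map_mul, map_pow, map_neg, map_one, map_natCast]
  rw [mul_assoc, this, Module.End.mul_apply, Module.algebraMap_end_apply, map_smul, phiOp_pow_one]

lemma betaOp_succ (T : H →L[ℂ] H) (k : ℕ) :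
    betaOp T (k + 1) = ContinuousLinearMap.adjoint T * betaOp T k * T - betaOp T k := by
  rw [betaOp_eq, betaOp_eq, pow_succ', Module.End.mul_apply, LinearMap.sub_apply,
    Module.End.one_apply, phiOp_apply]

/-- Conjugation commutes past the powers. -/
lemma conj_comm (T A : H →L[ℂ] H) (n : ℕ) :
    ContinuousLinearMap.adjoint T * ((ContinuousLinearMap.adjoint T) ^ n * A * T ^ n) * T
      = (ContinuousLinearMap.adjoint T) ^ n * (ContinuousLinearMap.adjoint T * A * T) * T ^ n := by
  set S := ContinuousLinearMap.adjoint T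
  have h1 : S * (S ^ n * A * T ^ n) * T = (S * S ^ n) * A * (T ^ n * T) := by noncomm_ring
  have h2 : S ^ n * (S * A * T) * T ^ n = (S ^ n * S) * A * (T * T ^ n) := by noncomm_ring
  rw [h1, h2, ← pow_succ, ← pow_succ', ← pow_succ, ← pow_succ']

lemma psi_Q (T : H →L[ℂ] H) (n k : ℕ) :
    (phiOp T - 1) ((ContinuousLinearMap.adjoint T) ^ n * betaOp T k * T ^ n)
      = (ContinuousLinearMap.adjoint T) ^ n * betaOp T (k + 1) * T ^ n := by
  rw [LinearMap.sub_apply, Module.End.one_apply, phiOp_apply, conj_comm, betaOp_succ]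
  noncomm_ring

lemma psi_pow_Q (T : H →L[ℂ] H) (n k p : ℕ) :
    ((phiOp T - 1) ^ p) ((ContinuousLinearMap.adjoint T) ^ n * betaOp T k * T ^ n)
      = (ContinuousLinearMap.adjoint T) ^ n * betaOp T (k + p) * T ^ n := by
  induction p with
  | zero => simp
  | succ p ih => rw [pow_succ', Module.End.mul_apply, ih, psi_Q, ← add_assoc]

theorem linearIndependent_of_nQuasi_strict_mIsometry (T : H →L[ℂ] H) (m n : ℕ)
    (hm : 1 ≤ m) (hn : 1 ≤ n)
    (hT : (ContinuousLinearMap.adjoint T) ^ n * betaOp T m * T ^ n = 0)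
    (hstrict : (ContinuousLinearMap.adjoint T) ^ n * betaOp T (m - 1) * T ^ n ≠ 0) :
    LinearIndependent ℂ
      (fun k : Fin m => (ContinuousLinearMap.adjoint T) ^ n * betaOp T k * T ^ n) := by
  classical
  set S := ContinuousLinearMap.adjoint T with hS
  set Q : ℕ → (H →L[ℂ] H) := fun k => S ^ n * betaOp T k * T ^ n with hQ
  -- Q j = 0 for j ≥ m
  have hQzero : ∀ j, m ≤ j → Q j = 0 := by
    intro j hj
    have hQm : Q m = 0 := hT
    have : Q j = ((phiOp T - 1) ^ (j - m)) (Q m) := by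
      rw [hQ]; simp only; rw [psi_pow_Q, Nat.add_sub_cancel' hj]
    rw [this, hQm, map_zero]
  rw [Fintype.linearIndependent_iff]
  intro g hg
  have main : ∀ v : ℕ, ∀ i : Fin m, (i : ℕ) = v → g i = 0 := by
    intro v
    induction v using Nat.strong_induction_on with
    | _ v ih =>
      intro i hi
      have hv : v < m := hi ▸ i.isLt
      have h0 : ((phiOp T - 1) ^ (m - 1 - v)) (∑ k : Fin m, g k • Q k) = 0 := by
        rw [hg, map_zero]
      rw [map_sum] at h0
      have hterm : ∀ k : Fin m,
          ((phiOp T - 1) ^ (m - 1 - v)) (g k • Q k) = g k • Q ((k : ℕ) + (m - 1 - v)) := by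
        intro k
        rw [map_smul, hQ]; simp only; rw [psi_pow_Q]
      simp only [hterm] at h0
      have hsingle : ∑ k : Fin m, g k • Q ((k : ℕ) + (m - 1 - v)) = g i • Q (m - 1) := by
        rw [Finset.sum_eq_single i]
        · rw [hi, Nat.add_sub_cancel' (by omega : v ≤ m - 1)]
        · intro k _ hk
          rcases lt_or_gt_of_ne (fun h : (k : ℕ) = v => hk (by
            apply Fin.ext; rw [h, ← hi])) with h | h
          · rw [ih _ (hi ▸ h) k rfl, zero_smul]
          · rw [hQzero _ (by omega), smul_zero]
        · intro h; exact absurd (Finset.mem_univ i) h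
      rw [hsingle] at h0
      rcases smul_eq_zero.mp h0 with h | h
      · exact h
      · exact absurd h hstrict
  intro i
  exact main i i rfl
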